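/- Let S = {(a,b) ∈ ℝ² | b²(1−a²) ≥ 0}. Then for every d ∈ ℕ, the polynomial x₁^d x₂ satisfies (x₁^d x₂)² ≤ x₂² at every point of S; hence x₁^d x₂ ∈ B₁(S) for all d, so B₁(S) is an infinite-dimensional vector space. -/

import Mathlib

open MvPolynomial

def Bset (n d : ℕ) (S : Set (Fin n → ℝ)) : Set (MvPolynomial (Fin n) ℝ) :=
  {p | ∃ q : MvPolynomial (Fin n) ℝ, q.totalDegree ≤ 2 * d ∧ ∀ a ∈ S, (eval a p) ^ 2 ≤ eval a q}

/-- `S = {(a,b) | b²(1-a²) ≥ 0}`. -/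
def Sstrip : Set (Fin 2 → ℝ) := {a | 0 ≤ (a 1) ^ 2 * (1 - (a 0) ^ 2)}

lemma eval_bound (d : ℕ) (a : Fin 2 → ℝ) (ha : a ∈ Sstrip) :
    ((a 0) ^ d * a 1) ^ 2 ≤ (a 1) ^ 2 := by
  have h : 0 ≤ (a 1) ^ 2 * (1 - (a 0) ^ 2) := ha
  rcases eq_or_ne (a 1) 0 with h1 | h1
  · simp [h1]
  · have hp : 0 < (a 1) ^ 2 := by positivity
    have h2 : (a 0) ^ 2 ≤ 1 := by nlinarith
    have : ((a 0) ^ d) ^ 2 ≤ 1 := by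
      have := pow_le_one₀ (sq_nonneg (a 0)) h2 (n := d)
      calc ((a 0) ^ d) ^ 2 = ((a 0) ^ 2) ^ d := by ring
        _ ≤ 1 := this
    nlinarith [sq_nonneg (a 1)]

lemma mem_Bset (d : ℕ) : (X 0 ^ d * X 1 : MvPolynomial (Fin 2) ℝ) ∈ Bset 2 1 Sstrip := by
  refine ⟨X 1 ^ 2, ?_, ?_⟩
  · calc (X 1 ^ 2 : MvPolynomial (Fin 2) ℝ).totalDegree ≤ 2 * (X 1 : MvPolynomial (Fin 2) ℝ).totalDegree := by
          exact totalDegree_pow (X 1 : MvPolynomial (Fin 2) ℝ) 2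
      _ ≤ 2 * 1 := by simp [totalDegree_X]
  · intro a ha
    simp only [map_mul, map_pow, eval_X]
    exact eval_bound d a ha

lemma li_family : LinearIndependent ℝ
    (fun d : ℕ => (X 0 ^ d * X 1 : MvPolynomial (Fin 2) ℝ)) := by
  have hb := (basisMonomials (Fin 2) ℝ).linearIndependent
  have key : (fun d : ℕ => (X 0 ^ d * X 1 : MvPolynomial (Fin 2) ℝ)) =
      (fun m : Fin 2 →₀ ℕ => (basisMonomials (Fin 2) ℝ) m) ∘
        (fun d : ℕ => Finsupp.single 0 d + Finsupp.single 1 1) := by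
    funext d
    simp [coe_basisMonomials, X_pow_eq_monomial, X, monomial_mul, monomial_pow]
  rw [key]
  refine hb.comp _ ?_
  intro d e h
  have := congrArg (fun f : Fin 2 →₀ ℕ => f 0) h
  simpa using this

theorem strip_union_axis_B1_infinite :
    (∀ (d : ℕ) (a : Fin 2 → ℝ), a ∈ Sstrip → ((a 0) ^ d * a 1) ^ 2 ≤ (a 1) ^ 2) ∧
    (∀ d : ℕ, (X 0 ^ d * X 1 : MvPolynomial (Fin 2) ℝ) ∈ Bset 2 1 Sstrip) ∧
    ¬ Module.Finite ℝ (Submodule.span ℝ (Bset 2 1 Sstrip)) := by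
  refine ⟨eval_bound, mem_Bset, ?_⟩
  intro hfin
  haveI := hfin
  haveI : FiniteDimensional ℝ (Submodule.span ℝ (Bset 2 1 Sstrip)) := hfin
  set M := Submodule.span ℝ (Bset 2 1 Sstrip)
  have hmem : ∀ d : ℕ, (X 0 ^ d * X 1 : MvPolynomial (Fin 2) ℝ) ∈ M :=
    fun d => Submodule.subset_span (mem_Bset d)
  have hli : LinearIndependent ℝ (fun d : ℕ => (⟨_, hmem d⟩ : M)) := by
    apply LinearIndependent.of_comp M.subtype
    exact li_family
  have := hli.lt_aleph0_of_finiteDimensional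
  simp at this
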